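/- arXiv:2307.15474 — 2 statements merged into one kernel-verified Lean document; each statement's English description precedes it below -/
import Mathlib

section
/- Let n ∈ ℕ, 1 ≤ q ≤ ∞, x ∈ [a,b], and p integrable on [a,b]. Then sup over f ∈ W^n_q[a,b] of |∫_a^b p(t) f(t) dt − Σ_{k=0}^{n−1} (1/k!)(∫_a^b p(t)(t−x)^k dt) f^{(k)}(x)| equals ‖r_x^n‖_{L_{q′}[a,b]}, where 1/q + 1/q′ = 1. -/
open MeasureTheory intervalIntegral ENNReal

/-- The kernels `r_x^k`: `r_x^0 = p` and
`r_x^{k+1}(s) = −∫_a^s r_x^k` for `s ≤ x`, `∫_s^b r_x^k` for `s ≥ x`. -/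
noncomputable def rk (a b x : ℝ) (p : ℝ → ℝ) : ℕ → ℝ → ℝ
  | 0 => p
  | k + 1 => fun s =>
      if s ≤ x then -(∫ t in a..s, rk a b x p k t)
      else ∫ t in s..b, rk a b x p k t

section basics
variable {a b x : ℝ} {p : ℝ → ℝ}

lemma primL_contOn (hab : a ≤ b) {f : ℝ → ℝ} (hf : IntervalIntegrable f volume a b) :
    ContinuousOn (fun s => ∫ t in a..s, f t) (Set.Icc a b) := by
  have := continuousOn_primitive_interval' hf (a := a) (by simp [Set.uIcc_of_le hab, hab])
  rwa [Set.uIcc_of_le hab] at this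

lemma primR_contOn (hab : a ≤ b) {f : ℝ → ℝ} (hf : IntervalIntegrable f volume a b) :
    ContinuousOn (fun s => ∫ t in s..b, f t) (Set.Icc a b) := by
  have h' : IntegrableOn f (Set.uIcc a b) volume := by
    rw [Set.uIcc_of_le hab]
    exact (intervalIntegrable_iff_integrableOn_Icc_of_le hab).1 hf
  have := continuousOn_primitive_interval_left h'
  rwa [Set.uIcc_of_le hab] at this

lemma rk_intervalIntegrable (hab : a ≤ b) (hx : x ∈ Set.Icc a b)
    (hp : IntervalIntegrable p volume a b) :
    ∀ k, IntervalIntegrable (rk a b x p k) volume a b := by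
  intro k
  induction k with
  | zero => exact hp
  | succ k ih =>
      rw [intervalIntegrable_iff_integrableOn_Icc_of_le hab]
      have hA : ContinuousOn (fun s => -(∫ t in a..s, rk a b x p k t)) (Set.Icc a b) :=
        (primL_contOn hab ih).neg
      have hB : ContinuousOn (fun s => ∫ t in s..b, rk a b x p k t) (Set.Icc a b) :=
        primR_contOn hab ih
      have h1 : IntegrableOn (rk a b x p (k+1)) (Set.Icc a x) volume := by
        refine ((hA.mono (Set.Icc_subset_Icc_right hx.2)).integrableOn_Icc).congr_fun ?_
          measurableSet_Icc
        intro s hs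
        simp only [rk, if_pos hs.2]
      have h2 : IntegrableOn (rk a b x p (k+1)) (Set.Ioc x b) volume := by
        refine (((hB.mono (Set.Icc_subset_Icc_left hx.1)).integrableOn_Icc).mono_set
          Set.Ioc_subset_Icc_self).congr_fun ?_ measurableSet_Ioc
        intro s hs
        simp only [rk, if_neg (not_le.2 hs.1)]
      have : Set.Icc a x ∪ Set.Ioc x b = Set.Icc a b := Set.Icc_union_Ioc_eq_Icc hx.1 hx.2
      rw [← this]
      exact h1.union h2

lemma rk_bound (hab : a ≤ b) (hx : x ∈ Set.Icc a b)
    (hp : IntervalIntegrable p volume a b) (k : ℕ) :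
    ∃ M : ℝ, ∀ s ∈ Set.Icc a b, |rk a b x p (k+1) s| ≤ M := by
  have ih := rk_intervalIntegrable hab hx hp k
  have hA : ContinuousOn (fun s => -(∫ t in a..s, rk a b x p k t)) (Set.Icc a b) :=
    (primL_contOn hab ih).neg
  have hB : ContinuousOn (fun s => ∫ t in s..b, rk a b x p k t) (Set.Icc a b) :=
    primR_contOn hab ih
  obtain ⟨M₁, hM₁⟩ := (isCompact_Icc (a := a) (b := b)).exists_bound_of_continuousOn hA
  obtain ⟨M₂, hM₂⟩ := (isCompact_Icc (a := a) (b := b)).exists_bound_of_continuousOn hB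
  refine ⟨max M₁ M₂, fun s hs => ?_⟩
  simp only [rk]
  by_cases h : s ≤ x
  · rw [if_pos h]
    exact le_trans (by simpa using hM₁ s hs) (le_max_left _ _)
  · rw [if_neg h]
    exact le_trans (by simpa using hM₂ s hs) (le_max_right _ _)

end basics

section step
variable {a b x : ℝ} {p : ℝ → ℝ}

lemma rk_mul_intervalIntegrable (hab : a ≤ b) (hx : x ∈ Set.Icc a b)
    (hp : IntervalIntegrable p volume a b) (k : ℕ) {g : ℝ → ℝ}
    (hg : IntervalIntegrable g volume a b) :
    IntervalIntegrable (fun t => rk a b x p (k+1) t * g t) volume a b := by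
  obtain ⟨M, hM⟩ := rk_bound hab hx hp k
  have hgIcc : IntegrableOn g (Set.Icc a b) volume :=
    (intervalIntegrable_iff_integrableOn_Icc_of_le hab).1 hg
  have hrIcc : IntegrableOn (rk a b x p (k+1)) (Set.Icc a b) volume :=
    (intervalIntegrable_iff_integrableOn_Icc_of_le hab).1 (rk_intervalIntegrable hab hx hp _)
  rw [intervalIntegrable_iff_integrableOn_Icc_of_le hab]
  refine Integrable.bdd_mul (c := M) hgIcc hrIcc.aestronglyMeasurable ?_
  refine (ae_restrict_iff' measurableSet_Icc).2 (ae_of_all _ fun s hs => ?_)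
  simpa using hM s hs

lemma rk_step (hab : a ≤ b) (hx : x ∈ Set.Icc a b) (hp : IntervalIntegrable p volume a b)
    (k : ℕ) {h g : ℝ → ℝ} (hg : IntervalIntegrable g volume a b)
    (hh : ∀ y ∈ Set.Icc a b, h y = h a + ∫ t in a..y, g t) :
    ∫ s in a..b, rk a b x p k s * h s
      = (∫ s in a..b, rk a b x p k s) * h x + ∫ t in a..b, rk a b x p (k+1) t * g t := by
  set r := rk a b x p k with hrdef
  have hr : IntervalIntegrable r volume a b := rk_intervalIntegrable hab hx hp k
  have contP : ContinuousOn (fun s => ∫ t in a..s, g t) (Set.Icc a b) := primL_contOn hab hg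
  have hrIoc : Integrable r (volume.restrict (Set.Ioc a b)) :=
    (intervalIntegrable_iff_integrableOn_Ioc_of_le hab).1 hr
  have hgIoc : Integrable g (volume.restrict (Set.Ioc a b)) :=
    (intervalIntegrable_iff_integrableOn_Ioc_of_le hab).1 hg
  -- Step A : expand h
  have e1 : ∫ s in a..b, r s * h s
      = (∫ s in a..b, r s * h a) + ∫ s in a..b, r s * ∫ t in a..s, g t := by
    rw [← integral_add (hr.mul_const _) (hr.mul_continuousOn (by rwa [Set.uIcc_of_le hab]))]
    refine integral_congr fun s hs => ?_
    rw [Set.uIcc_of_le hab] at hs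
    rw [hh s hs]; ring
  -- Step B : Fubini
  set F : ℝ × ℝ → ℝ := {z : ℝ × ℝ | z.2 ≤ z.1}.indicator (fun z => r z.1 * g z.2) with hF
  have hFint : Integrable F
      ((volume.restrict (Set.Ioc a b)).prod (volume.restrict (Set.Ioc a b))) :=
    (hrIoc.mul_prod hgIoc).indicator (measurableSet_le measurable_snd measurable_fst)
  have hFite : ∀ s t : ℝ, F (s, t) = if t ≤ s then r s * g t else 0 := by
    intro s t
    by_cases hts : t ≤ s
    · rw [hF, Set.indicator_of_mem (by exact hts), if_pos hts]
    · rw [hF, Set.indicator_of_notMem (by exact hts), if_neg hts]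
  have key : ∫ s in a..b, r s * ∫ t in a..s, g t
      = ∫ t in a..b, (∫ s in t..b, r s) * g t := by
    rw [integral_of_le hab, integral_of_le hab]
    have swap := integral_integral_swap (f := fun s t => F (s, t))
      (μ := volume.restrict (Set.Ioc a b)) (ν := volume.restrict (Set.Ioc a b)) hFint
    calc ∫ s in Set.Ioc a b, r s * ∫ t in a..s, g t
        = ∫ s in Set.Ioc a b, ∫ t in Set.Ioc a b, F (s, t) := by
          refine setIntegral_congr_fun measurableSet_Ioc fun s hs => ?_
          have e2 : ∀ t, F (s, t) = (Set.Iic s).indicator (fun t => r s * g t) t := by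
            intro t
            by_cases hts : t ≤ s
            · rw [hFite, if_pos hts, Set.indicator_of_mem (by exact hts)]
            · rw [hFite, if_neg hts, Set.indicator_of_notMem (by exact hts)]
          simp_rw [e2]
          rw [MeasureTheory.integral_indicator measurableSet_Iic, Measure.restrict_restrict measurableSet_Iic]
          have : Set.Iic s ∩ Set.Ioc a b = Set.Ioc a s := by
            ext t
            simp only [Set.mem_inter_iff, Set.mem_Iic, Set.mem_Ioc, Set.mem_setOf_eq]
            exact ⟨fun ⟨h1, h2⟩ => ⟨h2.1, h1⟩, fun ⟨h1, h2⟩ => ⟨h2, h1, h2.trans hs.2⟩⟩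
          rw [this, integral_of_le hs.1.le, MeasureTheory.integral_const_mul]
      _ = ∫ t in Set.Ioc a b, ∫ s in Set.Ioc a b, F (s, t) := swap
      _ = ∫ t in Set.Ioc a b, (∫ s in t..b, r s) * g t := by
          refine setIntegral_congr_fun measurableSet_Ioc fun t ht => ?_
          have e2 : ∀ s, F (s, t) = (Set.Ici t).indicator (fun s => r s * g t) s := by
            intro s
            by_cases hts : t ≤ s
            · rw [hFite, if_pos hts, Set.indicator_of_mem (by exact hts)]
            · rw [hFite, if_neg hts, Set.indicator_of_notMem (by exact hts)]
          simp_rw [e2]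
          rw [MeasureTheory.integral_indicator measurableSet_Ici, Measure.restrict_restrict measurableSet_Ici]
          have : Set.Ici t ∩ Set.Ioc a b = Set.Icc t b := by
            ext s
            simp only [Set.mem_inter_iff, Set.mem_Ici, Set.mem_Ioc, Set.mem_Icc]
            exact ⟨fun ⟨h1, h2⟩ => ⟨h1, h2.2⟩, fun ⟨h1, h2⟩ => ⟨h1, ht.1.trans_le h1, h2⟩⟩
          rw [this, MeasureTheory.integral_mul_const, integral_Icc_eq_integral_Ioc, ← integral_of_le ht.2]
  -- Step C : split the t-integral
  have hsub : ∀ c d, c ∈ Set.Icc a b → d ∈ Set.Icc a b → IntervalIntegrable r volume c d := by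
    intro c d hc hd
    apply hr.mono_set
    rw [Set.uIcc_of_le hab]
    exact Set.uIcc_subset_Icc hc hd
  have split : ∀ t ∈ Set.Icc a b, (∫ s in t..b, r s)
      = rk a b x p (k+1) t + (Set.Iic x).indicator (fun _ => ∫ s in a..b, r s) t := by
    intro t ht
    by_cases htx : t ≤ x
    · have hadd := integral_add_adjacent_intervals
        (hsub a t (Set.left_mem_Icc.2 hab) ht) (hsub t b ht (Set.right_mem_Icc.2 hab))
      have : rk a b x p (k+1) t = -(∫ s in a..t, r s) := by simp [rk, if_pos htx, hrdef]
      rw [this, Set.indicator_of_mem (by exact htx)]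
      linarith
    · have : rk a b x p (k+1) t = ∫ s in t..b, r s := by simp [rk, if_neg htx, hrdef]
      rw [this, Set.indicator_of_notMem (by exact htx)]
      ring
  have e3 : ∫ t in a..b, (∫ s in t..b, r s) * g t
      = (∫ t in a..b, rk a b x p (k+1) t * g t)
        + ∫ t in a..b, (Set.Iic x).indicator (fun t => (∫ s in a..b, r s) * g t) t := by
    have hint2 : IntervalIntegrable
        (fun t => (Set.Iic x).indicator (fun t => (∫ s in a..b, r s) * g t) t) volume a b := by
      rw [intervalIntegrable_iff_integrableOn_Icc_of_le hab]
      exact (((intervalIntegrable_iff_integrableOn_Icc_of_le hab).1 hg).const_mul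
        _).indicator measurableSet_Iic
    rw [← integral_add (rk_mul_intervalIntegrable hab hx hp k hg) hint2]
    refine integral_congr fun t hts => ?_
    rw [Set.uIcc_of_le hab] at hts
    rw [split t hts]
    by_cases htx : t ≤ x
    · rw [Set.indicator_of_mem (by exact htx), Set.indicator_of_mem (by exact htx)]; ring
    · rw [Set.indicator_of_notMem (by exact htx), Set.indicator_of_notMem (by exact htx)]; ring
  have e4 : ∫ t in a..b, (Set.Iic x).indicator (fun t => (∫ s in a..b, r s) * g t) t
      = (∫ s in a..b, r s) * (h x - h a) := by
    rw [integral_of_le hab, MeasureTheory.integral_indicator measurableSet_Iic,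
      Measure.restrict_restrict measurableSet_Iic]
    have : Set.Iic x ∩ Set.Ioc a b = Set.Ioc a x := by
      ext t
      simp only [Set.mem_inter_iff, Set.mem_Iic, Set.mem_Ioc]
      exact ⟨fun ⟨h1, h2⟩ => ⟨h2.1, h1⟩, fun ⟨h1, h2⟩ => ⟨h2, h1, h2.trans hx.2⟩⟩
    rw [this, ← integral_of_le hx.1, intervalIntegral.integral_const_mul]
    have := hh x hx
    have hxe : ∫ t in a..x, g t = h x - h a := by linarith
    rw [hxe]
  rw [e1, key, e3, e4, intervalIntegral.integral_mul_const]
  ring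

end step

section moment
variable {a b x : ℝ} {p : ℝ → ℝ}

lemma poly_prim (x a : ℝ) (m : ℕ) (y : ℝ) :
    (y - x)^(m+1) = (a - x)^(m+1) + ∫ t in a..y, ((m:ℝ)+1) * (t - x)^m := by
  rw [intervalIntegral.integral_const_mul,
    intervalIntegral.integral_comp_sub_right (fun t => t ^ m) x, integral_pow]
  have h0 : ((m:ℝ) + 1) ≠ 0 := by positivity
  push_cast
  field_simp
  ring

lemma rk_moment_step (hab : a ≤ b) (hx : x ∈ Set.Icc a b)
    (hp : IntervalIntegrable p volume a b) (k m : ℕ) :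
    ∫ s in a..b, rk a b x p k s * (s - x)^(m+1)
      = ((m:ℝ)+1) * ∫ t in a..b, rk a b x p (k+1) t * (t - x)^m := by
  have hg : IntervalIntegrable (fun t => ((m:ℝ)+1) * (t - x)^m) volume a b :=
    (Continuous.intervalIntegrable (by continuity) a b)
  have hstep := rk_step hab hx hp k (h := fun s => (s - x)^(m+1))
    (g := fun t => ((m:ℝ)+1) * (t - x)^m) hg (fun y _ => poly_prim x a m y)
  rw [hstep]
  simp only [sub_self, zero_pow (Nat.succ_ne_zero m), mul_zero, zero_add]
  have : ∀ t : ℝ, rk a b x p (k+1) t * (((m:ℝ)+1) * (t - x)^m)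
      = ((m:ℝ)+1) * (rk a b x p (k+1) t * (t - x)^m) := fun t => by ring
  simp_rw [this]
  rw [intervalIntegral.integral_const_mul]

lemma rk_moment (hab : a ≤ b) (hx : x ∈ Set.Icc a b)
    (hp : IntervalIntegrable p volume a b) :
    ∀ (d k : ℕ), ∫ s in a..b, rk a b x p k s * (s - x)^d
      = (d.factorial : ℝ) * ∫ s in a..b, rk a b x p (k+d) s := by
  intro d
  induction d with
  | zero => intro k; simp
  | succ d ih =>
      intro k
      rw [rk_moment_step hab hx hp k d, ih (k+1)]
      have he : k + 1 + d = k + (d+1) := by omega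
      rw [he, Nat.factorial_succ]
      push_cast
      ring

lemma rk_identity (hab : a ≤ b) (hx : x ∈ Set.Icc a b)
    (hp : IntervalIntegrable p volume a b) (n : ℕ) (fd : ℕ → ℝ → ℝ)
    (hint : ∀ k < n, IntervalIntegrable (fd (k+1)) volume a b)
    (hAC : ∀ k < n, ∀ y ∈ Set.Icc a b, fd k y = fd k a + ∫ t in a..y, fd (k+1) t) :
    ∫ t in a..b, rk a b x p n t * fd n t
      = (∫ t in a..b, p t * fd 0 t)
        - ∑ k ∈ Finset.range n, (∫ s in a..b, rk a b x p k s) * fd k x := by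
  induction n with
  | zero => simp [rk]
  | succ n ih =>
      have ih' := ih (fun k hk => hint k (hk.trans (Nat.lt_succ_self n)))
        (fun k hk => hAC k (hk.trans (Nat.lt_succ_self n)))
      have hstep := rk_step hab hx hp n (h := fd n) (g := fd (n+1))
        (hint n (Nat.lt_succ_self n)) (hAC n (Nat.lt_succ_self n))
      rw [Finset.sum_range_succ]
      linarith

end moment

noncomputable def prim (a : ℝ) (g : ℝ → ℝ) : ℕ → ℝ → ℝ
  | 0 => g
  | m + 1 => fun y => ∫ t in a..y, prim a g m t

section primsec
variable {a b x : ℝ} {p : ℝ → ℝ}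

lemma prim_intervalIntegrable (hab : a ≤ b) {g : ℝ → ℝ}
    (hg : IntervalIntegrable g volume a b) :
    ∀ m, IntervalIntegrable (prim a g m) volume a b := by
  intro m
  induction m with
  | zero => exact hg
  | succ m ih =>
      rw [intervalIntegrable_iff_integrableOn_Icc_of_le hab]
      exact (primL_contOn hab ih).integrableOn_Icc

lemma prim_family (n : ℕ) (hn : 1 ≤ n) (hab : a ≤ b) {g : ℝ → ℝ}
    (hg : IntervalIntegrable g volume a b) :
    ∃ fd : ℕ → ℝ → ℝ, fd 0 = prim a g n ∧ fd n = g ∧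
      (∀ k < n, IntervalIntegrable (fd (k + 1)) volume a b) ∧
      (∀ k < n, ∀ y ∈ Set.Icc a b, fd k y = fd k a + ∫ t in a..y, fd (k + 1) t) := by
  refine ⟨fun k => prim a g (n - k), by simp, by simp [Nat.sub_self, prim], ?_, ?_⟩
  · intro k _
    exact prim_intervalIntegrable hab hg _
  · intro k hk y _
    have he : n - k = (n - (k + 1)) + 1 := by omega
    have h1 : (fun k => prim a g (n - k)) k y = ∫ t in a..y, prim a g (n - (k+1)) t := by
      simp only [he, prim]
    have h2 : (fun k => prim a g (n - k)) k a = 0 := by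
      simp only [he, prim, integral_same]
    rw [h1, h2, zero_add]

end primsec

lemma measurable_real_sign : Measurable Real.sign := by
  unfold Real.sign
  exact Measurable.ite (measurableSet_lt measurable_id measurable_const) measurable_const
    (Measurable.ite (measurableSet_lt measurable_const measurable_id) measurable_const
      measurable_const)

lemma abs_real_sign_le_one (y : ℝ) : |Real.sign y| ≤ 1 := by
  rcases Real.sign_apply_eq y with h | h | h <;> rw [h] <;> norm_num

lemma mul_real_sign (y : ℝ) : y * Real.sign y = |y| := by
  rcases lt_trichotomy y 0 with h | h | h
  · rw [Real.sign_of_neg h, abs_of_neg h]; ring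
  · simp [h]
  · rw [Real.sign_of_pos h, abs_of_pos h]; ring

lemma integrable_of_ae_bound {μ : Measure ℝ} [IsFiniteMeasure μ] {f : ℝ → ℝ} (C : ℝ)
    (hm : AEStronglyMeasurable f μ) (h : ∀ᵐ w ∂μ, ‖f w‖ ≤ C) : Integrable f μ :=
  (memLp_top_of_bound hm C h).integrable le_top

lemma holder_abs {μ : Measure ℝ} (q q' : ℝ≥0∞) (hqq' : 1 / q + 1 / q' = 1)
    {r g : ℝ → ℝ} (hr : MemLp r q' μ) (hg : AEStronglyMeasurable g μ)
    (hgq : eLpNorm g q μ ≤ 1) (hrg : Integrable (fun t => r t * g t) μ) :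
    |∫ t, r t * g t ∂μ| ≤ (eLpNorm r q' μ).toReal := by
  have h1 : |∫ t, r t * g t ∂μ| ≤ ∫ t, ‖r t * g t‖ ∂μ := by
    rw [← Real.norm_eq_abs]
    exact norm_integral_le_integral_norm _
  have h2 : ENNReal.ofReal (∫ t, ‖r t * g t‖ ∂μ) = eLpNorm (fun t => r t * g t) 1 μ := by
    rw [ofReal_integral_norm_eq_lintegral_enorm hrg, eLpNorm_one_eq_lintegral_enorm]
  have h3 : eLpNorm (fun t => r t * g t) 1 μ ≤ eLpNorm r q' μ * eLpNorm g q μ := by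
    haveI : ENNReal.HolderTriple q' q 1 := ⟨by rw [inv_one, add_comm]; simpa [one_div] using hqq'⟩
    have := eLpNorm_le_eLpNorm_mul_eLpNorm'_of_norm (p := q') (q := q) (r := 1) hr.1 hg (· * ·) 1
      (Filter.Eventually.of_forall fun w => by simp [norm_mul])
    simpa using this
  have h4 : eLpNorm (fun t => r t * g t) 1 μ ≤ eLpNorm r q' μ := by
    refine le_trans h3 ?_
    calc eLpNorm r q' μ * eLpNorm g q μ ≤ eLpNorm r q' μ * 1 := by gcongr
      _ = _ := mul_one _
  calc |∫ t, r t * g t ∂μ| ≤ ∫ t, ‖r t * g t‖ ∂μ := h1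
    _ = (ENNReal.ofReal (∫ t, ‖r t * g t‖ ∂μ)).toReal :=
        (ENNReal.toReal_ofReal (integral_nonneg fun t => norm_nonneg _)).symm
    _ = (eLpNorm (fun t => r t * g t) 1 μ).toReal := by rw [h2]
    _ ≤ (eLpNorm r q' μ).toReal := ENNReal.toReal_mono hr.2.ne h4

lemma lower_q_top {μ : Measure ℝ} [IsFiniteMeasure μ] {r : ℝ → ℝ} (hr : Integrable r μ) :
    ∃ g : ℝ → ℝ, Integrable g μ ∧ eLpNorm g ⊤ μ ≤ 1 ∧
      ∫ t, r t * g t ∂μ = (eLpNorm r 1 μ).toReal := by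
  set h := hr.aestronglyMeasurable with hh
  set r' := h.mk r with hr'
  have hae : r =ᵐ[μ] r' := h.ae_eq_mk
  refine ⟨fun w => Real.sign (r' w), ?_, ?_, ?_⟩
  · refine integrable_of_ae_bound 1
      ((measurable_real_sign.comp h.stronglyMeasurable_mk.measurable).aestronglyMeasurable) ?_
    exact Filter.Eventually.of_forall fun w => by
      simpa [Real.norm_eq_abs] using abs_real_sign_le_one (r' w)
  · rw [eLpNorm_exponent_top]
    refine le_trans (eLpNormEssSup_le_of_ae_bound (C := 1) ?_) (by simp)
    exact Filter.Eventually.of_forall fun w => by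
      simpa [Real.norm_eq_abs] using abs_real_sign_le_one (r' w)
  · have e1 : ∫ t, r t * Real.sign (r' t) ∂μ = ∫ t, |r' t| ∂μ := by
      refine integral_congr_ae ?_
      filter_upwards [hae] with w hw
      rw [hw, mul_real_sign]
    have e2 : ENNReal.ofReal (∫ t, ‖r t‖ ∂μ) = eLpNorm r 1 μ := by
      rw [ofReal_integral_norm_eq_lintegral_enorm hr, eLpNorm_one_eq_lintegral_enorm]
    have e3 : ∫ t, ‖r t‖ ∂μ = ∫ t, |r' t| ∂μ := by
      refine integral_congr_ae ?_
      filter_upwards [hae] with w hw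
      rw [hw, Real.norm_eq_abs]
    rw [e1, ← e3, ← e2, ENNReal.toReal_ofReal (integral_nonneg fun t => norm_nonneg _)]

lemma lower_q_one {μ : Measure ℝ} [IsFiniteMeasure μ] {r : ℝ → ℝ} (hr : Integrable r μ)
    {c : ℝ} (hc : c < (eLpNorm r ⊤ μ).toReal) :
    ∃ g : ℝ → ℝ, Integrable g μ ∧ eLpNorm g 1 μ ≤ 1 ∧ c < ∫ t, r t * g t ∂μ := by
  rcases lt_or_ge c 0 with h0 | h0
  · exact ⟨0, integrable_zero _ _ _, by simp, by simpa using h0⟩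
  have hne : eLpNorm r ⊤ μ ≠ ∞ := by
    intro hcon
    rw [hcon] at hc
    simp at hc
    linarith
  have h1 : ENNReal.ofReal c < eLpNorm r ⊤ μ :=
    (ENNReal.ofReal_lt_iff_lt_toReal h0 hne).2 hc
  obtain ⟨d, hd1, hd2⟩ := exists_between h1
  have hdne : d ≠ ∞ := (hd2.trans_le le_top).ne
  set h := hr.aestronglyMeasurable with hh
  set r' := h.mk r with hr'def
  have hae : r =ᵐ[μ] r' := h.ae_eq_mk
  have hmeas : Measurable r' := h.stronglyMeasurable_mk.measurable
  set E : Set ℝ := {w | d < (‖r' w‖₊ : ℝ≥0∞)} with hEdef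
  have hE : MeasurableSet E :=
    measurableSet_lt measurable_const hmeas.nnnorm.coe_nnreal_ennreal
  have hEpos : 0 < μ E := by
    by_contra hcon
    push_neg at hcon
    have hE0 : μ E = 0 := le_antisymm hcon (by positivity)
    have hle : ∀ᵐ w ∂μ, (‖r' w‖₊ : ℝ≥0∞) ≤ d := by
      rw [ae_iff]
      refine measure_mono_null ?_ hE0
      intro w hw
      simpa [hEdef] using not_le.1 hw
    have : eLpNorm r ⊤ μ ≤ d := by
      rw [eLpNorm_exponent_top, eLpNormEssSup_congr_ae hae]
      exact essSup_le_of_ae_le d hle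
    exact absurd (hd2.trans_le this) (lt_irrefl _)
  have hEne : μ E ≠ ∞ := measure_ne_top μ E
  have hEtoRealpos : 0 < (μ E).toReal := ENNReal.toReal_pos hEpos.ne' hEne
  set cE : ℝ := ((μ E).toReal)⁻¹ with hcE
  have hcEnonneg : 0 ≤ cE := inv_nonneg.2 ENNReal.toReal_nonneg
  set g : ℝ → ℝ := E.indicator (fun w => Real.sign (r' w) * cE) with hgdef
  have hgmeas : Measurable g :=
    ((measurable_real_sign.comp hmeas).mul_const cE).indicator hE
  have hgbd : ∀ w, |g w| ≤ cE := by
    intro w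
    by_cases hw : w ∈ E
    · rw [hgdef, Set.indicator_of_mem hw, abs_mul, abs_of_nonneg hcEnonneg]
      calc |Real.sign (r' w)| * cE ≤ 1 * cE := by
            exact mul_le_mul_of_nonneg_right (abs_real_sign_le_one _) hcEnonneg
        _ = cE := one_mul _
    · rw [hgdef, Set.indicator_of_notMem hw]
      simpa using hcEnonneg
  refine ⟨g, ?_, ?_, ?_⟩
  · refine integrable_of_ae_bound cE hgmeas.aestronglyMeasurable ?_
    exact Filter.Eventually.of_forall fun w => by simpa [Real.norm_eq_abs] using hgbd w
  · have hmono : eLpNorm g 1 μ ≤ eLpNorm (E.indicator fun _ => cE) 1 μ := by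
      refine eLpNorm_mono fun w => ?_
      by_cases hw : w ∈ E
      · have h2' : ‖(E.indicator fun _ => cE) w‖ = cE := by
          rw [Set.indicator_of_mem hw, Real.norm_eq_abs, abs_of_nonneg hcEnonneg]
        rw [Real.norm_eq_abs, h2']
        exact hgbd w
      · rw [hgdef, Set.indicator_of_notMem hw, Set.indicator_of_notMem hw]
    refine hmono.trans ?_
    have hnn : ‖cE‖ₑ = (μ E)⁻¹ := by
      rw [← ofReal_norm_eq_enorm, Real.norm_eq_abs, abs_of_nonneg hcEnonneg, hcE,
        ENNReal.ofReal_inv_of_pos hEtoRealpos, ENNReal.ofReal_toReal hEne]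
    rw [eLpNorm_indicator_const hE one_ne_zero ENNReal.one_ne_top, hnn]
    refine le_of_eq ?_
    calc (μ E)⁻¹ * μ E ^ (1 / (1:ℝ≥0∞).toReal) = (μ E)⁻¹ * μ E := by norm_num
      _ = 1 := ENNReal.inv_mul_cancel hEpos.ne' hEne
  · have e1 : ∫ t, r t * g t ∂μ = ∫ t, r' t * g t ∂μ := by
      refine integral_congr_ae ?_
      filter_upwards [hae] with w hw
      rw [hw]
    have e2 : (fun w => r' w * g w)
        = E.indicator (fun w => r' w * Real.sign (r' w) * cE) := by
      funext w
      by_cases hw : w ∈ E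
      · rw [hgdef, Set.indicator_of_mem hw, Set.indicator_of_mem hw]; ring
      · rw [hgdef, Set.indicator_of_notMem hw, Set.indicator_of_notMem hw, mul_zero]
    have e3 : ∫ t, r' t * g t ∂μ = ∫ w in E, |r' w| * cE ∂μ := by
      rw [e2, MeasureTheory.integral_indicator hE]
      refine setIntegral_congr_fun hE fun w _ => ?_
      rw [mul_real_sign]
    have hint : IntegrableOn (fun w => |r' w|) E μ := ((hr.congr hae).abs).integrableOn
    have hptwise : ∀ w ∈ E, d.toReal ≤ |r' w| := by
      intro w hw
      have : d.toReal ≤ ((‖r' w‖₊ : ℝ≥0∞)).toReal :=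
        ENNReal.toReal_mono ENNReal.coe_ne_top (le_of_lt hw)
      simpa [Real.norm_eq_abs] using this
    have hge : d.toReal * (μ E).toReal ≤ ∫ w in E, |r' w| ∂μ :=
      by have := setIntegral_ge_of_const_le hE hEne hptwise hint
         rwa [smul_eq_mul, measureReal_def, mul_comm] at this
    have hcd : c < d.toReal := (ENNReal.ofReal_lt_iff_lt_toReal h0 hdne).1 hd1
    have : d.toReal = (d.toReal * (μ E).toReal) * cE := by
      rw [hcE]
      field_simp
    calc c < d.toReal := hcd
      _ = (d.toReal * (μ E).toReal) * cE := this
      _ ≤ (∫ w in E, |r' w| ∂μ) * cE := mul_le_mul_of_nonneg_right hge hcEnonneg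
      _ = ∫ w in E, |r' w| * cE ∂μ := (MeasureTheory.integral_mul_const cE _).symm
      _ = ∫ t, r t * g t ∂μ := by rw [← e3, ← e1]

lemma lower_mid {μ : Measure ℝ} [IsFiniteMeasure μ] {r : ℝ → ℝ} {M : ℝ}
    (hrmeas : AEStronglyMeasurable r μ) (hM : ∀ᵐ w ∂μ, |r w| ≤ M)
    {q q' : ℝ≥0∞} (hq0 : q ≠ 0) (hqtop : q ≠ ∞) (hq'0 : q' ≠ 0) (hq'top : q' ≠ ∞)
    (hcon : Real.HolderConjugate q.toReal q'.toReal)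
    (hN0 : eLpNorm r q' μ ≠ 0) :
    ∃ g : ℝ → ℝ, Integrable g μ ∧ eLpNorm g q μ ≤ 1 ∧
      ∫ w, r w * g w ∂μ = (eLpNorm r q' μ).toReal := by
  set t := q.toReal with htdef
  set s := q'.toReal with hsdef
  have hs1 : 1 < s := hcon.symm.lt
  have hs0' : s ≠ 0 := by linarith
  have hsm1 : s - 1 ≠ 0 := by linarith
  have hsm1nonneg : (0:ℝ) ≤ s - 1 := by linarith
  have hMem : MemLp r q' μ := (memLp_top_of_bound hrmeas M
    (by filter_upwards [hM] with w hw; rwa [Real.norm_eq_abs])).mono_exponent le_top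
  set r' := hrmeas.mk r with hr'def
  have hae : r =ᵐ[μ] r' := hrmeas.ae_eq_mk
  have hmeas : Measurable r' := hrmeas.stronglyMeasurable_mk.measurable
  have hM' : ∀ᵐ w ∂μ, |r' w| ≤ M := by
    filter_upwards [hM, hae] with w h1 h2
    rwa [← h2]
  set I := ∫ w, ‖r w‖ ^ s ∂μ with hIdef
  have hIval : eLpNorm r q' μ = ENNReal.ofReal (I ^ s⁻¹) :=
    hMem.eLpNorm_eq_integral_rpow_norm hq'0 hq'top
  have hInonneg : 0 ≤ I := integral_nonneg fun w => Real.rpow_nonneg (norm_nonneg _) _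
  have hIpos : 0 < I := by
    rcases hInonneg.lt_or_eq with hlt | heq
    · exact hlt
    · exfalso
      apply hN0
      rw [hIval, ← heq, Real.zero_rpow (inv_ne_zero hs0'), ENNReal.ofReal_zero]
  have hIeq : ∫ w, |r' w| ^ s ∂μ = I := by
    refine integral_congr_ae ?_
    filter_upwards [hae] with w hw
    rw [← hw, Real.norm_eq_abs]
  set C := I ^ ((s - 1)/s) with hCdef
  have hCpos : 0 < C := Real.rpow_pos_of_pos hIpos _
  set g : ℝ → ℝ := fun w => Real.sign (r' w) * |r' w| ^ (s - 1) / C with hgdef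
  have habs : ∀ w, |g w| = |r' w| ^ (s - 1) / C := by
    intro w
    rw [hgdef]
    simp only []
    rw [abs_div, abs_of_pos hCpos, abs_mul]
    rcases eq_or_ne (r' w) 0 with h | h
    · rw [h]
      simp [Real.zero_rpow hsm1]
    · have hsgn : |Real.sign (r' w)| = 1 := by
        rcases Real.sign_apply_eq_of_ne_zero _ h with h1 | h1 <;> rw [h1] <;> norm_num
      rw [hsgn, one_mul, abs_of_nonneg (Real.rpow_nonneg (abs_nonneg _) _)]
  have hgbd : ∀ᵐ w ∂μ, ‖g w‖ ≤ (max M 0) ^ (s-1) / C := by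
    filter_upwards [hM'] with w hw
    rw [Real.norm_eq_abs, habs w]
    refine (div_le_div_iff_of_pos_right hCpos).2 ?_
    exact Real.rpow_le_rpow (abs_nonneg _) (hw.trans (le_max_left _ _)) hsm1nonneg
  have hrpowmeas : Measurable fun w => |r' w| ^ (s - 1) :=
    (Real.continuous_rpow_const hsm1nonneg).measurable.comp hmeas.abs
  have hgmeas : Measurable g :=
    ((measurable_real_sign.comp hmeas).mul hrpowmeas).div_const C
  have hCt : C ^ t = I := by
    rw [hCdef, ← Real.rpow_mul hInonneg]
    have he : (s - 1)/s*t = 1 := by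
      have h1 : (s - 1) * t = s := hcon.symm.sub_one_mul_conj
      field_simp
      linarith
    rw [he, Real.rpow_one]
  refine ⟨g, integrable_of_ae_bound _ hgmeas.aestronglyMeasurable hgbd, ?_, ?_⟩
  · have hgMem : MemLp g q μ := (memLp_top_of_bound hgmeas.aestronglyMeasurable _
      hgbd).mono_exponent le_top
    rw [hgMem.eLpNorm_eq_integral_rpow_norm hq0 hqtop]
    have hone : ∫ w, ‖g w‖ ^ t ∂μ = 1 := by
      have hpt : ∀ w, ‖g w‖ ^ t = |r' w| ^ s / I := by
        intro w
        rw [Real.norm_eq_abs, habs w,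
          Real.div_rpow (Real.rpow_nonneg (abs_nonneg _) _) hCpos.le,
          ← Real.rpow_mul (abs_nonneg _), hcon.symm.sub_one_mul_conj, hCt]
      simp_rw [hpt]
      rw [MeasureTheory.integral_div, hIeq, div_self hIpos.ne']
    rw [hone, Real.one_rpow, ENNReal.ofReal_one]
  · have hpt : ∀ w, r' w * g w = |r' w| ^ s / C := by
      intro w
      have h1 : |r' w| * |r' w| ^ (s-1) = |r' w| ^ s := by
        rcases eq_or_ne (r' w) 0 with h | h
        · rw [h]
          simp [Real.zero_rpow hsm1, Real.zero_rpow hs0']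
        · have := Real.rpow_add (abs_pos.2 h) 1 (s-1)
          rw [show (1:ℝ) + (s-1) = s by ring, Real.rpow_one] at this
          rw [this]
      calc r' w * g w = (r' w * Real.sign (r' w)) * |r' w| ^ (s-1) / C := by rw [hgdef]; ring
        _ = |r' w| * |r' w| ^ (s-1) / C := by rw [mul_real_sign]
        _ = |r' w| ^ s / C := by rw [h1]
    have hval : ∫ w, r w * g w ∂μ = I / C := by
      have e1 : ∫ w, r w * g w ∂μ = ∫ w, r' w * g w ∂μ := by
        refine integral_congr_ae ?_
        filter_upwards [hae] with w hw
        rw [hw]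
      rw [e1]
      simp_rw [hpt]
      rw [MeasureTheory.integral_div, hIeq]
    rw [hval, hIval, ENNReal.toReal_ofReal (Real.rpow_nonneg hInonneg _), hCdef]
    have hfin : I / I ^ ((s-1)/s) = I ^ (1 - (s-1)/s) := by
      rw [Real.rpow_sub hIpos, Real.rpow_one]
    rw [hfin]
    congr 1
    field_simp
    ring


/-- Sharp Ostrowski-type inequality for the class `W^n_q[a,b]` (functions with
`f^{(n−1)}` absolutely continuous and `‖f^{(n)}‖_{L_q} ≤ 1`): the supremum of the
deviation `|∫ p f − Σ_{k<n} (1/k!)(∫ p(t)(t−x)^k dt) f^{(k)}(x)|` over the class equals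
`‖r_x^n‖_{L_{q'}[a,b]}`, where `1/q + 1/q' = 1`. -/
theorem stmt8 (a b : ℝ) (hab : a < b) (n : ℕ) (hn : 1 ≤ n)
    (q q' : ℝ≥0∞) (hq : 1 ≤ q) (hqq' : 1 / q + 1 / q' = 1)
    (p : ℝ → ℝ) (hp : IntervalIntegrable p volume a b)
    (x : ℝ) (hx : x ∈ Set.Icc a b) :
    sSup {v : ℝ | ∃ f : ℝ → ℝ, ∃ fd : ℕ → ℝ → ℝ, fd 0 = f ∧
        (∀ k < n, IntervalIntegrable (fd (k + 1)) volume a b) ∧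
        (∀ k < n, ∀ y ∈ Set.Icc a b, fd k y = fd k a + ∫ t in a..y, fd (k + 1) t) ∧
        eLpNorm (fd n) q (volume.restrict (Set.Icc a b)) ≤ 1 ∧
        v = |(∫ t in a..b, p t * f t)
              - ∑ k ∈ Finset.range n,
                  (1 / (Nat.factorial k : ℝ)) * (∫ t in a..b, p t * (t - x) ^ k) * fd k x|}
      = (eLpNorm (rk a b x p n) q' (volume.restrict (Set.Icc a b))).toReal := by
  have hab' : a ≤ b := hab.le
  set μ := volume.restrict (Set.Icc a b) with hμ
  haveI : IsFiniteMeasure μ := by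
    constructor
    rw [hμ, Measure.restrict_apply_univ]
    exact measure_Icc_lt_top
  set r := rk a b x p n with hrdef
  set S := {v : ℝ | ∃ f : ℝ → ℝ, ∃ fd : ℕ → ℝ → ℝ, fd 0 = f ∧
        (∀ k < n, IntervalIntegrable (fd (k + 1)) volume a b) ∧
        (∀ k < n, ∀ y ∈ Set.Icc a b, fd k y = fd k a + ∫ t in a..y, fd (k + 1) t) ∧
        eLpNorm (fd n) q μ ≤ 1 ∧
        v = |(∫ t in a..b, p t * f t)
              - ∑ k ∈ Finset.range n,
                  (1 / (Nat.factorial k : ℝ)) * (∫ t in a..b, p t * (t - x) ^ k) * fd k x|}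
    with hSdef
  have hrII : IntervalIntegrable r volume a b := rk_intervalIntegrable hab' hx hp n
  obtain ⟨n', hn'⟩ : ∃ m, n = m + 1 := ⟨n - 1, by omega⟩
  obtain ⟨M, hM⟩ := rk_bound hab' hx hp n'
  have hMae : ∀ᵐ w ∂μ, |r w| ≤ M := by
    rw [hμ]
    refine (ae_restrict_iff' measurableSet_Icc).2 (ae_of_all _ fun w hw => ?_)
    rw [hrdef, hn']
    exact hM w hw
  have hMae' : ∀ᵐ w ∂μ, ‖r w‖ ≤ M := by
    filter_upwards [hMae] with w hw
    rwa [Real.norm_eq_abs]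
  have hrInt : Integrable r μ := (intervalIntegrable_iff_integrableOn_Icc_of_le hab').1 hrII
  have hrmeas : AEStronglyMeasurable r μ := hrInt.aestronglyMeasurable
  have hrMem : MemLp r q' μ :=
    (memLp_top_of_bound hrmeas M hMae').mono_exponent le_top
  have hIcc : ∀ g : ℝ → ℝ, (∫ t in a..b, r t * g t) = ∫ t, r t * g t ∂μ := by
    intro g
    rw [integral_of_le hab', hμ, ← integral_Icc_eq_integral_Ioc]
  have hco : ∀ k : ℕ, (∫ t in a..b, p t * (t - x) ^ k)
      = (Nat.factorial k : ℝ) * ∫ s in a..b, rk a b x p k s := by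
    intro k
    have h := rk_moment hab' hx hp k 0
    rw [zero_add] at h
    simpa [rk] using h
  have hsump : ∀ fd : ℕ → ℝ → ℝ,
      ∑ k ∈ Finset.range n, (1 / (Nat.factorial k : ℝ))
          * (∫ t in a..b, p t * (t - x) ^ k) * fd k x
        = ∑ k ∈ Finset.range n, (∫ s in a..b, rk a b x p k s) * fd k x := by
    intro fd
    refine Finset.sum_congr rfl fun k _ => ?_
    rw [hco k]
    have hkne : (Nat.factorial k : ℝ) ≠ 0 := Nat.cast_ne_zero.2 (Nat.factorial_ne_zero k)
    field_simp
  have hmemS : ∀ g : ℝ → ℝ, IntervalIntegrable g volume a b → eLpNorm g q μ ≤ 1 →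
      |∫ t in a..b, r t * g t| ∈ S := by
    intro g hgII hgq
    obtain ⟨fd, hfd0, hfdn, hint, hAC⟩ := prim_family n hn hab' hgII
    refine ⟨prim a g n, fd, hfd0, hint, hAC, by rw [hfdn]; exact hgq, ?_⟩
    have hid := rk_identity hab' hx hp n fd hint hAC
    rw [hfdn, hfd0] at hid
    rw [hrdef, hid, hsump fd]
  have hforward : ∀ v ∈ S, ∃ g : ℝ → ℝ, IntervalIntegrable g volume a b ∧
      eLpNorm g q μ ≤ 1 ∧ v = |∫ t in a..b, r t * g t| := by
    rintro v ⟨f, fd, hfd0, hint, hAC, hnorm, hv⟩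
    have hnn : n' + 1 = n := hn'.symm
    refine ⟨fd n, ?_, hnorm, ?_⟩
    · have := hint n' (by omega)
      rwa [hnn] at this
    · have hid := rk_identity hab' hx hp n fd hint hAC
      rw [hfd0] at hid
      rw [hv, hsump fd, ← hid, hrdef]
  have hub : ∀ v ∈ S, v ≤ (eLpNorm r q' μ).toReal := by
    intro v hv
    obtain ⟨g, hgII, hgq, rfl⟩ := hforward v hv
    rw [hIcc g]
    have hgInt : Integrable g μ := (intervalIntegrable_iff_integrableOn_Icc_of_le hab').1 hgII
    refine holder_abs q q' hqq' hrMem hgInt.aestronglyMeasurable hgq ?_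
    exact Integrable.bdd_mul (c := M) hgInt hrmeas hMae'
  have hbdd : BddAbove S := ⟨_, fun v hv => hub v hv⟩
  have h0S : (0:ℝ) ∈ S := by
    have h := hmemS 0 intervalIntegrable_const (by simp)
    simpa using h
  refine le_antisymm (Real.sSup_le hub ENNReal.toReal_nonneg) ?_
  by_contra hlt
  push_neg at hlt
  have hSnonneg : 0 ≤ sSup S := le_csSup hbdd h0S
  have hq0 : q ≠ 0 := by
    intro h
    rw [h] at hq
    exact absurd hq (by simp)
  rcases eq_or_ne q 1 with hq1 | hq1
  · -- q = 1, q' = ∞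
    have hq' : q' = ∞ := by
      rw [hq1] at hqq'
      have h1 : (1:ℝ≥0∞) / 1 = 1 := by simp
      rw [h1] at hqq'
      have h2 : (1:ℝ≥0∞) + 1 / q' = 1 + 0 := by rw [add_zero]; exact hqq'
      have h3 : 1 / q' = 0 := (ENNReal.add_right_inj ENNReal.one_ne_top).1 h2
      rw [one_div, ENNReal.inv_eq_zero] at h3
      exact h3
    rw [hq'] at hlt
    obtain ⟨g, hgInt, hgq, hval⟩ := lower_q_one hrInt hlt
    have hgII : IntervalIntegrable g volume a b :=
      (intervalIntegrable_iff_integrableOn_Icc_of_le hab').2 hgInt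
    have hmem := hmemS g hgII (by rw [hq1]; exact hgq)
    have hgt : sSup S < |∫ t in a..b, r t * g t| := by
      rw [hIcc g]
      exact lt_of_lt_of_le hval (le_abs_self _)
    exact absurd (le_csSup hbdd hmem) (not_le.2 hgt)
  rcases eq_or_ne q ∞ with hqtop | hqtop
  · -- q = ∞, q' = 1
    have hq' : q' = 1 := by
      rw [hqtop] at hqq'
      have h1 : (1:ℝ≥0∞) / ∞ = 0 := by simp
      rw [h1, zero_add, one_div] at hqq'
      exact ENNReal.inv_eq_one.1 hqq'
    obtain ⟨g, hgInt, hgq, hval⟩ := lower_q_top hrInt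
    have hgII : IntervalIntegrable g volume a b :=
      (intervalIntegrable_iff_integrableOn_Icc_of_le hab').2 hgInt
    have hmem := hmemS g hgII (by rw [hqtop]; exact hgq)
    have hveq : |∫ t in a..b, r t * g t| = (eLpNorm r q' μ).toReal := by
      rw [hIcc g, hval, hq', abs_of_nonneg ENNReal.toReal_nonneg]
    rw [hveq] at hmem
    exact absurd (le_csSup hbdd hmem) (not_le.2 hlt)
  · -- 1 < q < ∞
    have hq1lt : 1 < q := lt_of_le_of_ne hq (Ne.symm hq1)
    have hq'top : q' ≠ ∞ := by
      intro h
      rw [h] at hqq'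
      have h1 : (1:ℝ≥0∞) / ∞ = 0 := by simp
      rw [h1, add_zero, one_div] at hqq'
      exact hq1 (ENNReal.inv_eq_one.1 hqq')
    have hq'0 : q' ≠ 0 := by
      intro h
      rw [h, ENNReal.div_zero one_ne_zero, add_top] at hqq'
      exact (ENNReal.top_ne_one) hqq'
    have hinvq_ne_top : 1/q ≠ ∞ := by
      rw [one_div]
      simpa [ENNReal.inv_eq_top] using hq0
    have hinvq'_ne_top : 1/q' ≠ ∞ := by
      rw [one_div]
      simpa [ENNReal.inv_eq_top] using hq'0
    have htsum : q.toReal⁻¹ + q'.toReal⁻¹ = 1 := by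
      have h := congrArg ENNReal.toReal hqq'
      rw [ENNReal.toReal_add hinvq_ne_top hinvq'_ne_top, ENNReal.toReal_div,
        ENNReal.toReal_div] at h
      simpa [one_div] using h
    have ht1 : 1 < q.toReal := by
      rw [← ENNReal.toReal_one]
      exact (ENNReal.toReal_lt_toReal ENNReal.one_ne_top hqtop).2 hq1lt
    have hcon : Real.HolderConjugate q.toReal q'.toReal := Real.holderConjugate_iff.2 ⟨ht1, htsum⟩
    rcases eq_or_ne (eLpNorm r q' μ) 0 with hN0 | hN0
    · rw [hN0] at hlt
      simp only [ENNReal.toReal_zero] at hlt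
      linarith
    · obtain ⟨g, hgInt, hgq, hval⟩ := lower_mid hrmeas hMae hq0 hqtop hq'0 hq'top hcon hN0
      have hgII : IntervalIntegrable g volume a b :=
        (intervalIntegrable_iff_integrableOn_Icc_of_le hab').2 hgInt
      have hmem := hmemS g hgII hgq
      have hveq : |∫ t in a..b, r t * g t| = (eLpNorm r q' μ).toReal := by
        rw [hIcc g, hval, abs_of_nonneg ENNReal.toReal_nonneg]
      rw [hveq] at hmem
      exact absurd (le_csSup hbdd hmem) (not_le.2 hlt)
end

section
/- Suppose p is non-negative and integrable on [a,b] with ∫_a^b p(t) dt > 0, and n ∈ ℕ is even. Then for every x ∈ [a,b], ∫_a^b r_x^n(t) dt ≠ 0 (indeed it is positive). -/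
open MeasureTheory intervalIntegral

lemma swapL (c d : ℝ) (hcd : c ≤ d) (f g : ℝ → ℝ)
    (hf : IntervalIntegrable f volume c d) (hg : Continuous g) :
    ∫ s in c..d, (∫ t in c..s, f t) * g s
      = ∫ t in c..d, f t * (∫ s in t..d, g s) := by
  have hfI : IntegrableOn f (Set.Ioc c d) volume :=
    (intervalIntegrable_iff_integrableOn_Ioc_of_le hcd).mp hf
  have hgI : IntegrableOn g (Set.Ioc c d) volume := hg.integrableOn_Ioc
  rw [integral_of_le hcd, integral_of_le hcd]
  have h1 : ∀ s ∈ Set.Ioc c d,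
      (∫ t in c..s, f t) * g s
        = ∫ t in Set.Ioc c d, (Set.Iic s).indicator f t * g s := by
    intro s hs
    symm
    have : ∀ t : ℝ, (Set.Iic s).indicator f t * g s
        = (Set.Iic s).indicator (fun u => f u * g s) t := by
      intro t; by_cases h : t ≤ s <;> simp [Set.indicator, h]
    simp_rw [this]
    rw [setIntegral_indicator measurableSet_Iic, Set.Ioc_inter_Iic, min_eq_right hs.2,
      ← integral_of_le hs.1.le, intervalIntegral.integral_mul_const]
  rw [setIntegral_congr_fun measurableSet_Ioc h1]
  have hint : Integrable (fun z : ℝ × ℝ => (Set.Iic z.1).indicator f z.2 * g z.1)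
      ((volume.restrict (Set.Ioc c d)).prod (volume.restrict (Set.Ioc c d))) := by
    have hbase : Integrable (fun z : ℝ × ℝ => g z.1 * f z.2)
        ((volume.restrict (Set.Ioc c d)).prod (volume.restrict (Set.Ioc c d))) :=
      Integrable.mul_prod hgI hfI
    have := hbase.indicator (s := {z : ℝ × ℝ | z.2 ≤ z.1})
      (measurableSet_le measurable_snd measurable_fst)
    refine this.congr (Filter.Eventually.of_forall fun z => ?_)
    by_cases h : z.2 ≤ z.1 <;>
      simp [Set.indicator, h, mul_comm]
  have := MeasureTheory.integral_integral_swap (f := fun s t => (Set.Iic s).indicator f t * g s)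
    (by exact hint)
  rw [this]
  refine setIntegral_congr_fun measurableSet_Ioc fun t ht => ?_
  have h2 : ∀ s : ℝ, (Set.Iic s).indicator f t * g s = f t * (Set.Ici t).indicator g s := by
    intro s
    by_cases h : t ≤ s <;> simp [Set.indicator, h]
  simp_rw [h2]
  rw [MeasureTheory.integral_const_mul, setIntegral_indicator measurableSet_Ici]
  congr 1
  have : Set.Ioc c d ∩ Set.Ici t = Set.Icc t d := by
    ext y
    constructor
    · rintro ⟨⟨_, h2⟩, h3⟩; exact ⟨h3, h2⟩
    · rintro ⟨h1, h2⟩; exact ⟨⟨lt_of_lt_of_le ht.1 h1, h2⟩, h1⟩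
  rw [this, integral_Icc_eq_integral_Ioc, integral_of_le ht.2]

lemma swapR (c d : ℝ) (hcd : c ≤ d) (f g : ℝ → ℝ)
    (hf : IntervalIntegrable f volume c d) (hg : Continuous g) :
    ∫ s in c..d, (∫ t in s..d, f t) * g s
      = ∫ t in c..d, f t * (∫ s in c..t, g s) := by
  have hfI : IntegrableOn f (Set.Ioc c d) volume :=
    (intervalIntegrable_iff_integrableOn_Ioc_of_le hcd).mp hf
  have hgI : IntegrableOn g (Set.Ioc c d) volume := hg.integrableOn_Ioc
  rw [integral_of_le hcd, integral_of_le hcd]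
  have h1 : ∀ s ∈ Set.Ioc c d,
      (∫ t in s..d, f t) * g s
        = ∫ t in Set.Ioc c d, (Set.Ioi s).indicator f t * g s := by
    intro s hs
    symm
    have : ∀ t : ℝ, (Set.Ioi s).indicator f t * g s
        = (Set.Ioi s).indicator (fun u => f u * g s) t := by
      intro t; by_cases h : s < t <;> simp [Set.indicator, h]
    simp_rw [this]
    have hset : Set.Ioc c d ∩ Set.Ioi s = Set.Ioc s d := by
      ext y
      constructor
      · rintro ⟨⟨_, h2⟩, h3⟩; exact ⟨h3, h2⟩
      · rintro ⟨h1, h2⟩; exact ⟨⟨lt_of_le_of_lt hs.1.le h1, h2⟩, h1⟩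
    rw [setIntegral_indicator measurableSet_Ioi, hset,
      ← integral_of_le hs.2, intervalIntegral.integral_mul_const]
  rw [setIntegral_congr_fun measurableSet_Ioc h1]
  have hint : Integrable (fun z : ℝ × ℝ => (Set.Ioi z.1).indicator f z.2 * g z.1)
      ((volume.restrict (Set.Ioc c d)).prod (volume.restrict (Set.Ioc c d))) := by
    have hbase : Integrable (fun z : ℝ × ℝ => g z.1 * f z.2)
        ((volume.restrict (Set.Ioc c d)).prod (volume.restrict (Set.Ioc c d))) :=
      Integrable.mul_prod hgI hfI
    have := hbase.indicator (s := {z : ℝ × ℝ | z.1 < z.2})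
      (measurableSet_lt measurable_fst measurable_snd)
    refine this.congr (Filter.Eventually.of_forall fun z => ?_)
    by_cases h : z.1 < z.2 <;>
      simp [Set.indicator, h, mul_comm]
  have := MeasureTheory.integral_integral_swap (f := fun s t => (Set.Ioi s).indicator f t * g s)
    (by exact hint)
  rw [this]
  refine setIntegral_congr_fun measurableSet_Ioc fun t ht => ?_
  have h2 : ∀ s : ℝ, (Set.Ioi s).indicator f t * g s = f t * (Set.Iio t).indicator g s := by
    intro s
    by_cases h : s < t <;> simp [Set.indicator, h]
  simp_rw [h2]
  rw [MeasureTheory.integral_const_mul, setIntegral_indicator measurableSet_Iio]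
  congr 1
  have hset : Set.Ioc c d ∩ Set.Iio t = Set.Ioo c t := by
    ext y
    constructor
    · rintro ⟨⟨h1, _⟩, h3⟩; exact ⟨h1, h3⟩
    · rintro ⟨h1, h2⟩; exact ⟨⟨h1, le_trans h2.le ht.2⟩, h2⟩
  rw [hset, ← integral_Ioc_eq_integral_Ioo, ← integral_of_le ht.1.le]

lemma rk_int (a b x : ℝ) (hax : a ≤ x) (hxb : x ≤ b) (p : ℝ → ℝ)
    (hp : IntervalIntegrable p volume a b) :
    ∀ k, IntervalIntegrable (rk a b x p k) volume a b := by
  have hab : a ≤ b := hax.trans hxb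
  intro k
  induction k with
  | zero => exact hp
  | succ k ih =>
    have hIcc : IntegrableOn (rk a b x p k) (Set.uIcc a b) volume := by
      rw [Set.uIcc_of_le hab, integrableOn_Icc_iff_integrableOn_Ioc]
      exact (intervalIntegrable_iff_integrableOn_Ioc_of_le hab).mp ih
    have h1 : ContinuousOn (fun s => ∫ t in a..s, rk a b x p k t) (Set.uIcc a b) :=
      continuousOn_primitive_interval hIcc
    have h2 : ContinuousOn (fun s => ∫ t in s..b, rk a b x p k t) (Set.uIcc a b) :=
      continuousOn_primitive_interval_left hIcc
    have sub1 : Set.uIcc a x ⊆ Set.uIcc a b := by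
      rw [Set.uIcc_of_le hax, Set.uIcc_of_le hab]
      exact Set.Icc_subset_Icc le_rfl hxb
    have sub2 : Set.uIcc x b ⊆ Set.uIcc a b := by
      rw [Set.uIcc_of_le hxb, Set.uIcc_of_le hab]
      exact Set.Icc_subset_Icc hax le_rfl
    have e1 : IntervalIntegrable (rk a b x p (k + 1)) volume a x := by
      have hc : IntervalIntegrable (fun s => -(∫ t in a..s, rk a b x p k t)) volume a x :=
        ((h1.mono sub1).neg).intervalIntegrable
      rw [intervalIntegrable_iff_integrableOn_Ioc_of_le hax] at hc ⊢
      exact hc.congr_fun (fun s hs => by simp [rk, hs.2]) measurableSet_Ioc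
    have e2 : IntervalIntegrable (rk a b x p (k + 1)) volume x b := by
      have hc : IntervalIntegrable (fun s => ∫ t in s..b, rk a b x p k t) volume x b :=
        (h2.mono sub2).intervalIntegrable
      rw [intervalIntegrable_iff_integrableOn_Ioc_of_le hxb] at hc ⊢
      exact hc.congr_fun (fun s hs => by simp [rk, hs.1.not_ge]) measurableSet_Ioc
    exact e1.trans e2

lemma pow_int (x : ℝ) (m : ℕ) (c d : ℝ) :
    (∫ s in c..d, (s - x) ^ m) = ((d - x) ^ (m + 1) - (c - x) ^ (m + 1)) / (m + 1) := by
  rw [intervalIntegral.integral_comp_sub_right (fun u => u ^ m) x, integral_pow]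

lemma key (a b x : ℝ) (hax : a ≤ x) (hxb : x ≤ b) (p : ℝ → ℝ)
    (hp : IntervalIntegrable p volume a b) :
    ∀ k m : ℕ, (∫ t in a..b, rk a b x p k t * (t - x) ^ m)
      = (Nat.factorial m : ℝ) / (Nat.factorial (k + m)) *
          ∫ t in a..b, p t * (t - x) ^ (k + m) := by
  have hab : a ≤ b := hax.trans hxb
  intro k
  induction k with
  | zero =>
    intro m
    simp only [rk, Nat.zero_add]
    rw [div_self (by exact_mod_cast Nat.factorial_ne_zero m), one_mul]
  | succ k ih =>
    intro m
    set f := rk a b x p k with hf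
    have hk : IntervalIntegrable f volume a b := rk_int a b x hax hxb p hp k
    have hk1 : IntervalIntegrable (rk a b x p (k + 1)) volume a b :=
      rk_int a b x hax hxb p hp (k + 1)
    have sub1 : Set.uIcc a x ⊆ Set.uIcc a b := by
      rw [Set.uIcc_of_le hax, Set.uIcc_of_le hab]
      exact Set.Icc_subset_Icc le_rfl hxb
    have sub2 : Set.uIcc x b ⊆ Set.uIcc a b := by
      rw [Set.uIcc_of_le hxb, Set.uIcc_of_le hab]
      exact Set.Icc_subset_Icc hax le_rfl
    have hkax : IntervalIntegrable f volume a x := hk.mono_set sub1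
    have hkxb : IntervalIntegrable f volume x b := hk.mono_set sub2
    have hg : Continuous fun s : ℝ => (s - x) ^ m :=
      (continuous_id.sub continuous_const).pow m
    have hg1 : Continuous fun s : ℝ => (s - x) ^ (m + 1) :=
      (continuous_id.sub continuous_const).pow (m + 1)
    have Int1 : IntervalIntegrable (fun t => rk a b x p (k + 1) t * (t - x) ^ m) volume a x :=
      (hk1.mono_set sub1).mul_continuousOn hg.continuousOn
    have Int2 : IntervalIntegrable (fun t => rk a b x p (k + 1) t * (t - x) ^ m) volume x b :=
      (hk1.mono_set sub2).mul_continuousOn hg.continuousOn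
    have hsplit : (∫ t in a..b, rk a b x p (k + 1) t * (t - x) ^ m)
        = (∫ t in a..x, rk a b x p (k + 1) t * (t - x) ^ m)
          + ∫ t in x..b, rk a b x p (k + 1) t * (t - x) ^ m :=
      (integral_add_adjacent_intervals Int1 Int2).symm
    -- left piece
    have hA : (∫ t in a..x, rk a b x p (k + 1) t * (t - x) ^ m)
        = (1 / ((m : ℝ) + 1)) * ∫ t in a..x, f t * (t - x) ^ (m + 1) := by
      have e : (∫ s in a..x, rk a b x p (k + 1) s * (s - x) ^ m)
          = ∫ s in a..x, (-(∫ t in a..s, f t)) * (s - x) ^ m := by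
        apply intervalIntegral.integral_congr
        intro s hs
        rw [Set.uIcc_of_le hax] at hs
        simp [rk, hs.2, hf]
      rw [e]
      have : (∫ s in a..x, (-(∫ t in a..s, f t)) * (s - x) ^ m)
          = -(∫ s in a..x, (∫ t in a..s, f t) * (s - x) ^ m) := by
        rw [← intervalIntegral.integral_neg]; congr 1; funext s; ring
      rw [this, swapL a x hax f _ hkax hg]
      have e2 : (∫ t in a..x, f t * ∫ s in t..x, (s - x) ^ m)
          = ∫ t in a..x, f t * (((x - x) ^ (m + 1) - (t - x) ^ (m + 1)) / (m + 1)) := by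
        congr 1; funext t; rw [pow_int]
      rw [e2, ← intervalIntegral.integral_const_mul]
      rw [← intervalIntegral.integral_neg]
      congr 1; funext t
      have hm : ((m : ℝ) + 1) ≠ 0 := by positivity
      field_simp
      ring
    -- right piece
    have hB : (∫ t in x..b, rk a b x p (k + 1) t * (t - x) ^ m)
        = (1 / ((m : ℝ) + 1)) * ∫ t in x..b, f t * (t - x) ^ (m + 1) := by
      have e : (∫ s in x..b, rk a b x p (k + 1) s * (s - x) ^ m)
          = ∫ s in x..b, (∫ t in s..b, f t) * (s - x) ^ m := by
        apply intervalIntegral.integral_congr_ae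
        filter_upwards with s hs
        rw [Set.uIoc_of_le hxb] at hs
        simp [rk, hs.1.not_ge, hf]
      rw [e, swapR x b hxb f _ hkxb hg]
      have e2 : (∫ t in x..b, f t * ∫ s in x..t, (s - x) ^ m)
          = ∫ t in x..b, f t * (((t - x) ^ (m + 1) - (x - x) ^ (m + 1)) / (m + 1)) := by
        congr 1; funext t; rw [pow_int]
      rw [e2, ← intervalIntegral.integral_const_mul]
      congr 1; funext t
      have hm : ((m : ℝ) + 1) ≠ 0 := by positivity
      field_simp
      ring
    have IntP1 : IntervalIntegrable (fun t => f t * (t - x) ^ (m + 1)) volume a x :=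
      hkax.mul_continuousOn hg1.continuousOn
    have IntP2 : IntervalIntegrable (fun t => f t * (t - x) ^ (m + 1)) volume x b :=
      hkxb.mul_continuousOn hg1.continuousOn
    rw [hsplit, hA, hB, ← mul_add, integral_add_adjacent_intervals IntP1 IntP2,
      ih (m + 1)]
    have hcast : k + (m + 1) = k + 1 + m := by omega
    rw [hcast, Nat.factorial_succ m]
    have hm : ((m : ℝ) + 1) ≠ 0 := by positivity
    have hF : ((Nat.factorial (k + 1 + m) : ℝ)) ≠ 0 := by
      exact_mod_cast Nat.factorial_ne_zero _
    push_cast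
    field_simp

/-- If `p ≥ 0` is integrable on `[a,b]` with `∫_a^b p > 0` and `n` is even, then for
every `x ∈ [a,b]` the integral `∫_a^b r_x^n(t) dt` is positive (in particular nonzero). -/
theorem stmt11 (a b : ℝ) (hab : a < b) (n : ℕ) (hn : 0 < n) (hne : Even n)
    (p : ℝ → ℝ) (hp : IntervalIntegrable p volume a b)
    (hp0 : ∀ t ∈ Set.Icc a b, 0 ≤ p t)
    (hppos : 0 < ∫ t in a..b, p t) :
    ∀ x ∈ Set.Icc a b, 0 < ∫ t in a..b, rk a b x p n t := by
  intro x hx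
  obtain ⟨hax, hxb⟩ := hx
  have hab' : a ≤ b := hab.le
  have hkey := key a b x hax hxb p hp n 0
  simp only [pow_zero, mul_one, Nat.add_zero, Nat.factorial_zero, Nat.cast_one] at hkey
  rw [hkey]
  set J := ∫ t in a..b, p t * (t - x) ^ n with hJ
  have hq0 : ∀ t ∈ Set.Icc a b, 0 ≤ p t * (t - x) ^ n := fun t ht =>
    mul_nonneg (hp0 t ht) (hne.pow_nonneg _)
  have hJ0 : 0 ≤ J := intervalIntegral.integral_nonneg hab' hq0
  have hJne : J ≠ 0 := by
    intro hzero
    have hg : Continuous fun t : ℝ => (t - x) ^ n :=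
      (continuous_id.sub continuous_const).pow n
    have hqint : IntegrableOn (fun t => p t * (t - x) ^ n) (Set.Ioc a b) volume :=
      (intervalIntegrable_iff_integrableOn_Ioc_of_le hab').mp
        (hp.mul_continuousOn hg.continuousOn)
    have hJset : J = ∫ t in Set.Ioc a b, p t * (t - x) ^ n := integral_of_le hab'
    have hae : (fun t => p t * (t - x) ^ n) =ᵐ[volume.restrict (Set.Ioc a b)] 0 := by
      rw [← MeasureTheory.integral_eq_zero_iff_of_nonneg_ae _ hqint]
      · rw [← hJset]; exact hzero
      · rw [Filter.EventuallyLE, ae_restrict_iff' measurableSet_Ioc]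
        exact Filter.Eventually.of_forall fun t ht =>
          hq0 t ⟨ht.1.le, ht.2⟩
    have hnex : ∀ᵐ t ∂(volume.restrict (Set.Ioc a b)), t ≠ x := by
      refine ae_restrict_of_ae ?_
      exact compl_mem_ae_iff.mpr (measure_singleton x)
    have hpae : p =ᵐ[volume.restrict (Set.Ioc a b)] 0 := by
      filter_upwards [hae, hnex] with t h1 h2
      have hpow : (t - x) ^ n ≠ 0 := pow_ne_zero _ (sub_ne_zero.mpr h2)
      simpa [hpow] using h1
    have : (∫ t in a..b, p t) = 0 := by
      rw [integral_of_le hab', integral_congr_ae hpae]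
      simp
    exact hppos.ne' this
  have hJpos : 0 < J := lt_of_le_of_ne hJ0 (Ne.symm hJne)
  have hfac : (0 : ℝ) < (Nat.factorial n : ℝ) := by
    exact_mod_cast Nat.factorial_pos n
  positivity
end
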